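/- Let G(V,E) be a chordal graph with maximal cliques C_1, …, C_t, and let Q ∈ S_G be a partial symmetric matrix (entries specified on the diagonal and on positions corresponding to edges of G). Then Q admits a positive semidefinite completion (i.e., Q = Π_G(P) for some positive semidefinite P) if and only if every principal submatrix Q[C_i] indexed by a maximal clique C_i is positive semidefinite. -/

import Mathlib

open scoped Classical

/-- A graph is chordal if every cycle of length at least four has a chord. -/
def IsChordal {V : Type*} (G : SimpleGraph V) : Prop :=
  ∀ ⦃v : V⦄ (w : G.Walk v v), w.IsCycle → 4 ≤ w.length →
    ∃ a b, a ∈ w.support ∧ b ∈ w.support ∧ G.Adj a b ∧ ¬ w.toSubgraph.Adj a b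

/-- A maximal clique of `G`. -/
def IsMaximalClique {V : Type*} (G : SimpleGraph V) (C : Set V) : Prop :=
  G.IsClique C ∧ ∀ D, G.IsClique D → C ⊆ D → D = C

namespace GJSW

open SimpleGraph Walk

variable {V W : Type*} {G : SimpleGraph V}

/-- Chordality transfers to comap along an embedding. -/
lemma isChordal_comap (hG : IsChordal G) (f : W ↪ V) : IsChordal (G.comap f) := by
  intro v w hcyc hlen
  let F : G.comap f →g G := ⟨f, fun h => h⟩
  have hFinj : Function.Injective F := f.injective
  have hcyc' : (w.map F).IsCycle := hcyc.map hFinj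
  have hlen' : 4 ≤ (w.map F).length := by rwa [Walk.length_map]
  obtain ⟨a, b, ha, hb, hadj, hnadj⟩ := hG (w.map F) hcyc' hlen'
  rw [Walk.support_map, List.mem_map] at ha hb
  obtain ⟨a', ha', rfl⟩ := ha
  obtain ⟨b', hb', rfl⟩ := hb
  refine ⟨a', b', ha', hb', hadj, fun hadj' => hnadj ?_⟩
  rw [Walk.toSubgraph_map]
  exact ⟨a', b', hadj', rfl, rfl⟩

/-- Reachability avoiding a set `S`. -/
def AReach (G : SimpleGraph V) (S : Set V) (a b : V) : Prop :=
  ∃ w : G.Walk a b, ∀ u ∈ w.support, u ∉ S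

lemma AReach.not_mem_left {S : Set V} {a b : V} (h : AReach G S a b) : a ∉ S := by
  obtain ⟨w, hw⟩ := h; exact hw a w.start_mem_support

lemma AReach.not_mem_right {S : Set V} {a b : V} (h : AReach G S a b) : b ∉ S := by
  obtain ⟨w, hw⟩ := h; exact hw b w.end_mem_support

lemma AReach.refl {S : Set V} {a : V} (h : a ∉ S) : AReach G S a a :=
  ⟨Walk.nil, by simpa using h⟩

lemma AReach.symm {S : Set V} {a b : V} (h : AReach G S a b) : AReach G S b a := by
  obtain ⟨w, hw⟩ := h
  exact ⟨w.reverse, fun u hu => hw u (by simpa [Walk.support_reverse] using hu)⟩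

lemma AReach.trans {S : Set V} {a b c : V} (h1 : AReach G S a b) (h2 : AReach G S b c) :
    AReach G S a c := by
  obtain ⟨w1, hw1⟩ := h1
  obtain ⟨w2, hw2⟩ := h2
  refine ⟨w1.append w2, fun u hu => ?_⟩
  rw [Walk.mem_support_append_iff] at hu
  exact hu.elim (hw1 u) (hw2 u)

lemma AReach.adj {S : Set V} {a b c : V} (h : AReach G S a b) (hadj : G.Adj b c)
    (hc : c ∉ S) : AReach G S a c :=
  h.trans ⟨Walk.cons hadj Walk.nil, by
    intro u hu
    simp only [Walk.support_cons, Walk.support_nil, List.mem_cons, List.mem_singleton] at hu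
    rcases hu with rfl | hu
    · exact h.not_mem_right
    · rcases hu with rfl | h'
      · exact hc
      · simp at h'⟩

lemma AReach.of_walk_mem {S : Set V} {a b : V} (w : G.Walk a b)
    (hw : ∀ u ∈ w.support, u ∉ S) {u : V} (hu : u ∈ w.support) : AReach G S a u :=
  ⟨w.takeUntil u hu, fun x hx => hw x (w.support_takeUntil_subset hu hx)⟩



variable {V : Type*} {G : SimpleGraph V}

lemma edge_mem_of_length_one {u v : V} (w : G.Walk u v) (h : w.length = 1) :
    s(u, v) ∈ w.edges := by
  cases w with
  | nil => simp at h
  | cons hadj p =>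
    have : p.length = 0 := by simpa using h
    have := Walk.eq_of_length_eq_zero this
    subst this
    simp

/-- In a walk containing both endpoints of a non-walk-edge `s(u1,u2)` of `G`,
one can shortcut to obtain a strictly shorter walk with support contained in
the original support. -/
lemma shortcut {x y : V} (w : G.Walk x y) {u1 u2 : V}
    (h1 : u1 ∈ w.support) (h2 : u2 ∈ w.support) (hadj : G.Adj u1 u2)
    (hne : s(u1, u2) ∉ w.edges) :
    ∃ w' : G.Walk x y, (∀ u ∈ w'.support, u ∈ w.support) ∧ w'.length < w.length := by
  induction w with
  | nil =>
    simp only [Walk.support_nil, List.mem_singleton] at h1 h2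
    exact absurd (h1.trans h2.symm) hadj.ne
  | @cons x v y hxv q ih =>
    by_cases hu1 : u1 = x
    · by_cases hu2 : u2 = x
      · exact absurd (hu1.trans hu2.symm) hadj.ne
      · -- u1 = x, u2 ∈ q.support
        subst hu1
        have hq2 : u2 ∈ q.support := by
          rcases (Walk.mem_support_iff _).mp h2 with h | h
          · exact absurd h hu2
          · simpa [Walk.support_cons] using h
        refine ⟨Walk.cons hadj (q.dropUntil u2 hq2), ?_, ?_⟩
        · intro u hu
          rw [Walk.support_cons, List.mem_cons] at hu ⊢
          rcases hu with rfl | hu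
          · exact Or.inl rfl
          · exact Or.inr (q.support_dropUntil_subset hq2 hu)
        · simp only [Walk.length_cons, add_lt_add_iff_right, Nat.succ_lt_succ_iff]
          have hspec := q.take_spec hq2
          have hlen : (q.takeUntil u2 hq2).length + (q.dropUntil u2 hq2).length = q.length := by
            rw [← Walk.length_append, hspec]
          have htne : (q.takeUntil u2 hq2).length ≠ 0 := by
            intro h0
            have : v = u2 := Walk.eq_of_length_eq_zero h0
            subst this
            exact hne (by simp)
          omega
    · by_cases hu2 : u2 = x
      · -- symmetric: u2 = x, u1 ∈ q.support
        subst hu2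
        have hq1 : u1 ∈ q.support := by
          rcases (Walk.mem_support_iff _).mp h1 with h | h
          · exact absurd h hu1
          · simpa [Walk.support_cons] using h
        refine ⟨Walk.cons hadj.symm (q.dropUntil u1 hq1), ?_, ?_⟩
        · intro u hu
          rw [Walk.support_cons, List.mem_cons] at hu ⊢
          rcases hu with rfl | hu
          · exact Or.inl rfl
          · exact Or.inr (q.support_dropUntil_subset hq1 hu)
        · simp only [Walk.length_cons, add_lt_add_iff_right, Nat.succ_lt_succ_iff]
          have hspec := q.take_spec hq1
          have hlen : (q.takeUntil u1 hq1).length + (q.dropUntil u1 hq1).length = q.length := by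
            rw [← Walk.length_append, hspec]
          have htne : (q.takeUntil u1 hq1).length ≠ 0 := by
            intro h0
            have : v = u1 := Walk.eq_of_length_eq_zero h0
            subst this
            exact hne (by rw [Sym2.eq_swap]; simp)
          omega
      · have hq1 : u1 ∈ q.support := by
          rcases (Walk.mem_support_iff _).mp h1 with h | h
          · exact absurd h hu1
          · simpa [Walk.support_cons] using h
        have hq2 : u2 ∈ q.support := by
          rcases (Walk.mem_support_iff _).mp h2 with h | h
          · exact absurd h hu2
          · simpa [Walk.support_cons] using h
        have hne' : s(u1, u2) ∉ q.edges := fun h => hne (by simp [h])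
        obtain ⟨q', hsub, hlt⟩ := ih hq1 hq2 hne'
        refine ⟨Walk.cons hxv q', ?_, by simpa using hlt⟩
        intro u hu
        rw [Walk.support_cons, List.mem_cons] at hu ⊢
        exact hu.imp id (hsub u)

/-- From a walk `a → x` whose support counts `x` exactly once (and with nonzero
length) extract the penultimate vertex: a neighbor of `x` together with a walk
from `a` to it avoiding `x`, with support inside the original. -/
lemma penultimate {a x : V} (w : G.Walk a x) (hlen : w.length ≠ 0)
    (hcount : w.support.count x = 1) :
    ∃ u, G.Adj u x ∧ ∃ w' : G.Walk a u,
      (∀ z ∈ w'.support, z ∈ w.support) ∧ x ∉ w'.support := by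
  cases hw : w.reverse with
  | nil =>
    exfalso
    apply hlen
    have := congrArg Walk.length hw
    simpa using this
  | @cons _ u _ hadj t =>
    refine ⟨u, hadj.symm, t.reverse, ?_, ?_⟩
    · intro z hz
      have : z ∈ w.reverse.support := by
        rw [hw, Walk.support_cons]
        exact List.mem_cons_of_mem _ (by simpa [Walk.support_reverse] using hz)
      simpa [Walk.support_reverse] using this
    · intro hx
      have hxt : x ∈ t.support := by simpa [Walk.support_reverse] using hx
      have : w.reverse.support.count x = 1 := by
        rw [Walk.support_reverse, List.count_reverse]
        exact hcount
      rw [hw, Walk.support_cons, List.count_cons_self] at this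
      have : t.support.count x = 0 := by omega
      exact (List.count_eq_zero.mp this) hxt



/-- A walk between distinct non-adjacent vertices has an internal vertex. -/
lemma walk_mid {a b : V} (hab : a ≠ b) (hnadj : ¬ G.Adj a b) (w : G.Walk a b) :
    ∃ u ∈ w.support, u ≠ a ∧ u ≠ b := by
  cases w with
  | nil => exact absurd rfl hab
  | @cons _ x _ h q =>
    by_cases hx : x = b
    · subst hx; exact absurd h hnadj
    · exact ⟨x, by simp [Walk.support_cons], h.ne', hx⟩

lemma walk_cons_destruct {x y : V} (p : G.Walk x y) (h : p.length ≠ 0) :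
    ∃ (α : V) (ha : G.Adj x α) (t : G.Walk α y), p = Walk.cons ha t := by
  cases p with
  | nil => simp at h
  | cons ha t => exact ⟨_, ha, t, rfl⟩

/-- `S` is an `a`–`b` separator. -/
def IsSep (G : SimpleGraph V) (a b : V) (S : Set V) : Prop :=
  a ∉ S ∧ b ∉ S ∧ ¬ AReach G S a b

lemma IsSep.symm' {a b : V} {S : Set V} (h : IsSep G a b S) : IsSep G b a S :=
  ⟨h.2.1, h.1, fun hr => h.2.2 hr.symm⟩

lemma exists_min_sep [Fintype V] {a b : V} (hab : a ≠ b) (hnadj : ¬ G.Adj a b) :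
    ∃ S : Finset V, IsSep G a b ↑S ∧ ∀ T : Finset V, IsSep G a b ↑T → S.card ≤ T.card := by
  have h0 : IsSep G a b ↑(Finset.univ \ {a, b} : Finset V) := by
    refine ⟨by simp, by simp [hab.symm], ?_⟩
    rintro ⟨w, hw⟩
    obtain ⟨u, hu, hua, hub⟩ := walk_mid hab hnadj w
    exact hw u hu (by simp [hua, hub])
  obtain ⟨S, hS, hmin⟩ := Finset.exists_min_image
    (Finset.univ.filter fun T : Finset V => IsSep G a b ↑T) Finset.card
    ⟨_, Finset.mem_filter.mpr ⟨Finset.mem_univ _, h0⟩⟩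
  rw [Finset.mem_filter] at hS
  exact ⟨S, hS.2, fun T hT => hmin T (by simpa using hT)⟩

/-- Every member of a minimum separator has a neighbor in the `a`-side component. -/
lemma sep_neighbor [Fintype V] {a b : V} {S : Finset V} (hS : IsSep G a b ↑S)
    (hmin : ∀ T : Finset V, IsSep G a b ↑T → S.card ≤ T.card) {x : V} (hx : x ∈ S) :
    ∃ u, G.Adj u x ∧ AReach G ↑S a u := by
  have hcard : (S.erase x).card < S.card := Finset.card_erase_lt_of_mem hx
  have hnotsep : ¬ IsSep G a b ↑(S.erase x) := fun h => absurd (hmin _ h) (by omega)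
  have hreach : AReach G ↑(S.erase x) a b := by
    by_contra h
    exact hnotsep ⟨by simp [hS.1], by simp [hS.2.1], h⟩
  obtain ⟨w, hw⟩ := hreach
  have hxw : x ∈ w.support := by
    by_contra hxw
    refine hS.2.2 ⟨w, fun u hu => ?_⟩
    intro huS
    have hux : u ≠ x := by rintro rfl; exact hxw hu
    exact hw u hu (by simp [huS, hux])
  set w1 := w.takeUntil x hxw with hw1def
  have hw1 : ∀ u ∈ w1.support, u ∉ (↑(S.erase x) : Set V) :=
    fun u hu => hw u (w.support_takeUntil_subset hxw hu)
  have hcount : w1.support.count x = 1 := w.count_support_takeUntil_eq_one hxw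
  have hlen : w1.length ≠ 0 := by
    intro h0
    have : a = x := Walk.eq_of_length_eq_zero h0
    exact hS.1 (this ▸ hx)
  obtain ⟨u, hadj, w', hsub, hxnot⟩ := penultimate w1 hlen hcount
  refine ⟨u, hadj, ⟨w', fun z hz hzS => ?_⟩⟩
  have hzx : z ≠ x := by rintro rfl; exact hxnot hz
  exact hw1 z (hsub z hz) (by simp [hzS, hzx])

/-- A minimum separator in a chordal graph is a clique. -/
lemma sep_clique [Fintype V] (hchord : IsChordal G) {a b : V} {S : Finset V}
    (hS : IsSep G a b ↑S) (hmin : ∀ T : Finset V, IsSep G a b ↑T → S.card ≤ T.card)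
    {x y : V} (hx : x ∈ S) (hy : y ∈ S) (hxy : x ≠ y) : G.Adj x y := by
  by_contra hnadj
  -- neighbors in both sides
  obtain ⟨uxa, huxa_adj, huxa⟩ := sep_neighbor hS hmin hx
  obtain ⟨uya, huya_adj, huya⟩ := sep_neighbor hS hmin hy
  have hS' : IsSep G b a ↑S := hS.symm'
  have hmin' : ∀ T : Finset V, IsSep G b a ↑T → S.card ≤ T.card :=
    fun T hT => hmin T hT.symm'
  obtain ⟨uxb, huxb_adj, huxb⟩ := sep_neighbor hS' hmin' hx
  obtain ⟨uyb, huyb_adj, huyb⟩ := sep_neighbor hS' hmin' hy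
  -- walks with interior in the respective components
  have hexA : ∃ n, ∃ w : G.Walk x y,
      (∀ u ∈ w.support, u = x ∨ u = y ∨ AReach G ↑S a u) ∧ w.length = n := by
    obtain ⟨wm, hwm⟩ := (huxa.symm.trans huya : AReach G ↑S uxa uya)
    refine ⟨_, Walk.cons huxa_adj.symm (wm.append (Walk.cons huya_adj Walk.nil)), ?_, rfl⟩
    intro u hu
    rw [Walk.support_cons, List.mem_cons] at hu
    rcases hu with rfl | hu
    · exact Or.inl rfl
    rw [Walk.mem_support_append_iff] at hu
    rcases hu with hu | hu
    · exact Or.inr (Or.inr (huxa.trans (AReach.of_walk_mem wm hwm hu)))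
    · rw [Walk.support_cons, List.mem_cons] at hu
      rcases hu with rfl | hu
      · exact Or.inr (Or.inr huya)
      · simp only [Walk.support_nil, List.mem_singleton] at hu
        exact Or.inr (Or.inl hu)
  have hexB : ∃ n, ∃ w : G.Walk x y,
      (∀ u ∈ w.support, u = x ∨ u = y ∨ AReach G ↑S b u) ∧ w.length = n := by
    obtain ⟨wm, hwm⟩ := (huxb.symm.trans huyb : AReach G ↑S uxb uyb)
    refine ⟨_, Walk.cons huxb_adj.symm (wm.append (Walk.cons huyb_adj Walk.nil)), ?_, rfl⟩
    intro u hu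
    rw [Walk.support_cons, List.mem_cons] at hu
    rcases hu with rfl | hu
    · exact Or.inl rfl
    rw [Walk.mem_support_append_iff] at hu
    rcases hu with hu | hu
    · exact Or.inr (Or.inr (huxb.trans (AReach.of_walk_mem wm hwm hu)))
    · rw [Walk.support_cons, List.mem_cons] at hu
      rcases hu with rfl | hu
      · exact Or.inr (Or.inr huyb)
      · simp only [Walk.support_nil, List.mem_singleton] at hu
        exact Or.inr (Or.inl hu)
  -- minimal such walks, made into paths
  set nA := Nat.find hexA with hnAdef
  obtain ⟨wA0, hwA0, hwA0len⟩ := Nat.find_spec hexA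
  set nB := Nat.find hexB with hnBdef
  obtain ⟨wB0, hwB0, hwB0len⟩ := Nat.find_spec hexB
  set pA := wA0.bypass with hpAdef
  set pB := wB0.bypass with hpBdef
  have hpA_path : pA.IsPath := Walk.bypass_isPath wA0
  have hpB_path : pB.IsPath := Walk.bypass_isPath wB0
  have hpA_prop : ∀ u ∈ pA.support, u = x ∨ u = y ∨ AReach G ↑S a u :=
    fun u hu => hwA0 u (wA0.support_bypass_subset hu)
  have hpB_prop : ∀ u ∈ pB.support, u = x ∨ u = y ∨ AReach G ↑S b u :=
    fun u hu => hwB0 u (wB0.support_bypass_subset hu)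
  have hpA_min : ∀ w : G.Walk x y,
      (∀ u ∈ w.support, u = x ∨ u = y ∨ AReach G ↑S a u) → nA ≤ w.length :=
    fun w hw => Nat.find_min' hexA ⟨w, hw, rfl⟩
  have hpB_min : ∀ w : G.Walk x y,
      (∀ u ∈ w.support, u = x ∨ u = y ∨ AReach G ↑S b u) → nB ≤ w.length :=
    fun w hw => Nat.find_min' hexB ⟨w, hw, rfl⟩
  have hpA_len_le : pA.length ≤ nA := le_trans wA0.length_bypass_le (le_of_eq hwA0len)
  have hpB_len_le : pB.length ≤ nB := le_trans wB0.length_bypass_le (le_of_eq hwB0len)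
  -- both have length ≥ 2
  have hAB_disj : ∀ u, AReach G ↑S a u → AReach G ↑S b u → False :=
    fun u h1 h2 => hS.2.2 (h1.trans h2.symm)
  have hlen2 : ∀ (p : G.Walk x y), p.length ≠ 0 ∧ p.length ≠ 1 := by
    intro p
    constructor
    · intro h0; exact hxy (Walk.eq_of_length_eq_zero h0)
    · intro h1; exact hnadj (p.adj_of_mem_edges (edge_mem_of_length_one p h1))
  have hpA_len2 : 2 ≤ pA.length := by
    have := hlen2 pA; omega
  have hpB_len2 : 2 ≤ pB.length := by
    have := hlen2 pB; omega
  clear_value pA pB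
  clear hpAdef hpBdef hwA0 hwB0 hwA0len hwB0len
  obtain ⟨α, hxα, t, rfl⟩ := walk_cons_destruct pA (by omega)
  rw [Walk.length_cons] at hpA_len2
  have htx : x ∉ t.support := ((Walk.cons_isPath_iff _ _).mp hpA_path).2
  have ht_path : t.IsPath := ((Walk.cons_isPath_iff _ _).mp hpA_path).1
  have halpha_ne_x : α ≠ x := hxα.ne'
  have halpha_ne_y : α ≠ y := fun h => hnadj (h ▸ hxα)
  have halphaA : AReach G ↑S a α := by
    have hαmem : α ∈ (Walk.cons hxα t).support := by
      rw [Walk.support_cons]; exact List.mem_cons_of_mem _ t.start_mem_support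
    rcases hpA_prop α hαmem with h | h | h
    · exact absurd h halpha_ne_x
    · exact absurd h halpha_ne_y
    · exact h
  -- pB.reverse facts
  have hpBrev_path : pB.reverse.IsPath := (Walk.isPath_reverse_iff pB).mpr hpB_path
  have hrevcons : pB.reverse.support = y :: pB.reverse.support.tail := Walk.support_eq_cons _
  have hy_tail : y ∉ pB.reverse.support.tail := by
    have := hpBrev_path.support_nodup
    rw [hrevcons] at this
    exact (List.nodup_cons.mp this).1
  have htail_sub : ∀ u ∈ pB.reverse.support.tail, u ∈ pB.support := by
    intro u hu
    have : u ∈ pB.reverse.support := by rw [hrevcons]; exact List.mem_cons_of_mem _ hu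
    rwa [Walk.support_reverse, List.mem_reverse] at this
  -- the appended walk is a path
  have hrest_path : (t.append pB.reverse).IsPath := by
    rw [Walk.isPath_def, Walk.support_append]
    refine List.nodup_append.mpr ⟨ht_path.support_nodup, ?_, ?_⟩
    · have := hpBrev_path.support_nodup
      rw [hrevcons] at this
      exact (List.nodup_cons.mp this).2
    · intro u hu1 w hu2 huw; subst huw
      have huA : AReach G ↑S a u := by
        rcases hpA_prop u (by rw [Walk.support_cons]; exact List.mem_cons_of_mem _ hu1)
          with h | h | h
        · exact absurd h (by rintro rfl; exact htx hu1)
        · exact absurd h (by rintro rfl; exact hy_tail hu2)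
        · exact h
      rcases hpB_prop u (htail_sub u hu2) with h | h | h
      · exact huA.not_mem_right (h ▸ (by exact_mod_cast hx))
      · exact huA.not_mem_right (h ▸ (by exact_mod_cast hy))
      · exact hAB_disj u huA h
  have hedge_rest : s(x, α) ∉ (t.append pB.reverse).edges := by
    rw [Walk.edges_append, List.mem_append]
    rintro (h | h)
    · exact htx (t.fst_mem_support_of_mem_edges h)
    · have hmem : α ∈ pB.reverse.support := Walk.snd_mem_support_of_mem_edges _ h
      rw [Walk.support_reverse, List.mem_reverse] at hmem
      rcases hpB_prop α hmem with h1 | h1 | h1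
      · exact halpha_ne_x h1
      · exact halpha_ne_y h1
      · exact hAB_disj α halphaA h1
  have hcyc : (Walk.cons hxα (t.append pB.reverse)).IsCycle :=
    (Walk.cons_isCycle_iff _ _).mpr ⟨hrest_path, hedge_rest⟩
  have hclen : 4 ≤ (Walk.cons hxα (t.append pB.reverse)).length := by
    rw [Walk.length_cons, Walk.length_append, Walk.length_reverse]
    omega
  obtain ⟨u1, u2, hu1, hu2, huadj, hnsub⟩ := hchord _ hcyc hclen
  have hedge : s(u1, u2) ∉ (Walk.cons hxα (t.append pB.reverse)).edges := by
    intro h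
    exact hnsub (SimpleGraph.Subgraph.mem_edgeSet.mp ((Walk.mem_edges_toSubgraph _).mpr h))
  have hsupp : ∀ u ∈ (Walk.cons hxα (t.append pB.reverse)).support,
      u ∈ (Walk.cons hxα t).support ∨ u ∈ pB.support := by
    intro u hu
    rw [Walk.support_cons, List.mem_cons] at hu
    rcases hu with rfl | hu
    · exact Or.inl (Walk.start_mem_support _)
    rw [Walk.mem_support_append_iff] at hu
    rcases hu with hu | hu
    · exact Or.inl (by rw [Walk.support_cons]; exact List.mem_cons_of_mem _ hu)
    · right; rwa [Walk.support_reverse, List.mem_reverse] at hu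
  have hedgesA : ∀ e ∈ (Walk.cons hxα t).edges,
      e ∈ (Walk.cons hxα (t.append pB.reverse)).edges := by
    intro e he
    rw [Walk.edges_cons, List.mem_cons] at he ⊢
    rcases he with rfl | he
    · exact Or.inl rfl
    · exact Or.inr (by rw [Walk.edges_append, List.mem_append]; exact Or.inl he)
  have hedgesB : ∀ e ∈ pB.edges, e ∈ (Walk.cons hxα (t.append pB.reverse)).edges := by
    intro e he
    rw [Walk.edges_cons, List.mem_cons]
    exact Or.inr (by rw [Walk.edges_append, List.mem_append, Walk.edges_reverse,
      List.mem_reverse]; exact Or.inr he)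
  have caseA : ∀ z1 z2, z1 ∈ (Walk.cons hxα t).support → z2 ∈ (Walk.cons hxα t).support →
      G.Adj z1 z2 → s(z1, z2) ∉ (Walk.cons hxα (t.append pB.reverse)).edges → False := by
    intro z1 z2 hz1 hz2 hadj hne
    obtain ⟨w', hw'sub, hw'len⟩ := shortcut (Walk.cons hxα t) hz1 hz2 hadj
      (fun h => hne (hedgesA _ h))
    have := hpA_min w' (fun u hu => hpA_prop u (hw'sub u hu))
    omega
  have caseB : ∀ z1 z2, z1 ∈ pB.support → z2 ∈ pB.support →
      G.Adj z1 z2 → s(z1, z2) ∉ (Walk.cons hxα (t.append pB.reverse)).edges → False := by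
    intro z1 z2 hz1 hz2 hadj hne
    obtain ⟨w', hw'sub, hw'len⟩ := shortcut pB hz1 hz2 hadj (fun h => hne (hedgesB _ h))
    have := hpB_min w' (fun u hu => hpB_prop u (hw'sub u hu))
    omega
  rcases hsupp u1 hu1 with h1 | h1 <;> rcases hsupp u2 hu2 with h2 | h2
  · exact caseA u1 u2 h1 h2 huadj hedge
  · -- u1 on the a-side path, u2 on the b-side path
    rcases hpA_prop u1 h1 with rfl | rfl | hu1A
    · exact caseB u1 u2 pB.start_mem_support h2 huadj hedge
    · exact caseB u1 u2 pB.end_mem_support h2 huadj hedge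
    · rcases hpB_prop u2 h2 with rfl | rfl | hu2B
      · exact caseA u1 u2 h1 (Walk.start_mem_support _) huadj hedge
      · exact caseA u1 u2 h1 (Walk.end_mem_support _) huadj hedge
      · exact hAB_disj u2 (hu1A.adj huadj hu2B.not_mem_right) hu2B
  · rcases hpA_prop u2 h2 with rfl | rfl | hu2A
    · exact caseB u1 u2 h1 pB.start_mem_support huadj hedge
    · exact caseB u1 u2 h1 pB.end_mem_support huadj hedge
    · rcases hpB_prop u1 h1 with rfl | rfl | hu1B
      · exact caseA u1 u2 (Walk.start_mem_support _) h2 huadj hedge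
      · exact caseA u1 u2 (Walk.end_mem_support _) h2 huadj hedge
      · exact hAB_disj u1 (hu2A.adj huadj.symm hu1B.not_mem_right) hu1B
  · exact caseB u1 u2 h1 h2 huadj hedge


section Universe
universe u

set_option maxHeartbeats 1000000 in
/-- A simplicial vertex on the `a` side of a minimum separator, assuming the
statement for smaller vertex sets. -/
lemma side_simplicial {V : Type u} [Fintype V] [DecidableEq V] {G : SimpleGraph V}
    (hchord : IsChordal G) {a b : V} {S : Finset V}
    (hS : IsSep G a b ↑S) (hclique : ∀ x ∈ S, ∀ y ∈ S, x ≠ y → G.Adj x y)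
    {n : ℕ} (hcard : Fintype.card V ≤ n + 1)
    (IH : ∀ (W : Type u) [Fintype W] [DecidableEq W] (H : SimpleGraph W),
      Fintype.card W ≤ n → IsChordal H →
      (∀ x y : W, x ≠ y → H.Adj x y) ∨
      ∃ x y : W, x ≠ y ∧ ¬H.Adj x y ∧ H.IsClique (H.neighborSet x) ∧
        H.IsClique (H.neighborSet y)) :
    ∃ v, AReach G ↑S a v ∧ G.IsClique (G.neighborSet v) := by
  set s : Set V := ↑S ∪ {u | AReach G ↑S a u} with hsdef
  have hb : b ∉ s := by
    rintro (h | h)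
    · exact hS.2.1 h
    · exact hS.2.2 h
  have hcard' : Fintype.card s ≤ n := by
    have h1 : Fintype.card s < Fintype.card V := by
      refine Fintype.card_lt_of_injective_of_notMem Subtype.val Subtype.val_injective (b := b) ?_
      rw [Subtype.range_coe]
      exact hb
    omega
  set G' : SimpleGraph s := G.comap (Function.Embedding.subtype _) with hG'def
  have hG'chord : IsChordal G' := isChordal_comap hchord (Function.Embedding.subtype _)
  have nbr_mem : ∀ v : V, AReach G ↑S a v → ∀ u, G.Adj v u → u ∈ s := by
    intro v hv u hadj
    by_cases hu : u ∈ (↑S : Set V)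
    · exact Or.inl hu
    · exact Or.inr (hv.adj hadj hu)
  have hadj' : ∀ (u w : s), G'.Adj u w ↔ G.Adj ↑u ↑w := fun u w => Iff.rfl
  rcases IH s G' hcard' hG'chord with hcomp | ⟨x1, x2, hne, hnadj, hcl1, hcl2⟩
  · refine ⟨a, AReach.refl hS.1, ?_⟩
    intro u hu w hw huw
    have hus : u ∈ s := nbr_mem a (AReach.refl hS.1) u hu
    have hws : w ∈ s := nbr_mem a (AReach.refl hS.1) w hw
    exact hcomp ⟨u, hus⟩ ⟨w, hws⟩ (fun h => huw (congrArg Subtype.val h))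
  · have hoff : (x1 : V) ∉ (↑S : Set V) ∨ (x2 : V) ∉ (↑S : Set V) := by
      by_contra h
      push_neg at h
      exact hnadj ((hadj' x1 x2).mpr
        (hclique x1 h.1 x2 h.2 (fun hval => hne (Subtype.ext hval))))
    have key : ∀ z : s, (z : V) ∉ (↑S : Set V) → G'.IsClique (G'.neighborSet z) →
        ∃ v, AReach G ↑S a v ∧ G.IsClique (G.neighborSet v) := by
      intro z hzS hzcl
      have hzA : AReach G ↑S a ↑z := by
        rcases z.2 with h | h
        · exact absurd h hzS
        · exact h
      refine ⟨z, hzA, ?_⟩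
      intro u hu w hw huw
      have hus : u ∈ s := nbr_mem z hzA u hu
      have hws : w ∈ s := nbr_mem z hzA w hw
      exact (hadj' _ _).mp (hzcl (show G'.Adj z ⟨u, hus⟩ from hu)
        (show G'.Adj z ⟨w, hws⟩ from hw) (fun h => huw (congrArg Subtype.val h)))
    rcases hoff with h | h
    · exact key x1 h hcl1
    · exact key x2 h hcl2

/-- Every finite chordal graph is complete or has two nonadjacent simplicial
vertices. -/
theorem complete_or_two_simplicial :
    ∀ (n : ℕ) (V : Type u) [Fintype V] [DecidableEq V] (G : SimpleGraph V),
      Fintype.card V ≤ n → IsChordal G →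
      (∀ x y : V, x ≠ y → G.Adj x y) ∨
      ∃ x y : V, x ≠ y ∧ ¬G.Adj x y ∧ G.IsClique (G.neighborSet x) ∧
        G.IsClique (G.neighborSet y) := by
  intro n
  induction n with
  | zero =>
    intro V _ _ G hcard _
    have : IsEmpty V := Fintype.card_eq_zero_iff.mp (le_antisymm hcard (Nat.zero_le _))
    exact Or.inl fun x => this.elim x
  | succ n IH =>
    intro V _ _ G hcard hchord
    by_cases hcomp : ∀ x y : V, x ≠ y → G.Adj x y
    · exact Or.inl hcomp
    · right
      push_neg at hcomp
      obtain ⟨a, b, hab, hnadj⟩ := hcomp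
      obtain ⟨S, hS, hmin⟩ := exists_min_sep hab hnadj
      have hclS : ∀ x ∈ S, ∀ y ∈ S, x ≠ y → G.Adj x y :=
        fun x hx y hy hxy => sep_clique hchord hS hmin hx hy hxy
      obtain ⟨va, hvaA, hvacl⟩ := side_simplicial hchord hS hclS hcard IH
      obtain ⟨vb, hvbB, hvbcl⟩ := side_simplicial hchord hS.symm' hclS hcard IH
      have hne : va ≠ vb := by rintro rfl; exact hS.2.2 (hvaA.trans hvbB.symm)
      have hnadj2 : ¬G.Adj va vb :=
        fun h => hS.2.2 ((hvaA.adj h hvbB.not_mem_right).trans hvbB.symm)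
      exact ⟨va, vb, hne, hnadj2, hvacl, hvbcl⟩

/-- Dirac: every nonempty finite chordal graph has a simplicial vertex. -/
theorem exists_simplicial {V : Type u} [Fintype V] [DecidableEq V] [Nonempty V]
    {G : SimpleGraph V} (hchord : IsChordal G) :
    ∃ v, G.IsClique (G.neighborSet v) := by
  rcases complete_or_two_simplicial (Fintype.card V) V G le_rfl hchord with h | ⟨x, _, _, _, hx, _⟩
  · exact ⟨Classical.arbitrary V, fun u hu w hw huw => h u w huw⟩
  · exact ⟨x, hx⟩

end Universe

section MatrixPrelim

variable {V : Type*} [Fintype V] [DecidableEq V]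

lemma sum_split (v : V) (f : V → ℝ) :
    ∑ u, f u = f v + ∑ u : {w : V // w ≠ v}, f u.1 := by
  rw [← Finset.sum_filter_add_sum_filter_not Finset.univ (fun u => u = v) f]
  congr 1
  · rw [Finset.filter_eq']
    simp
  · exact Finset.sum_subtype _ (by simp) f

lemma sum_support_subtype (p : V → Prop) (f : V → ℝ) (h0 : ∀ u, ¬ p u → f u = 0) :
    ∑ u, f u = ∑ u : {w : V // p w}, f u.1 := by
  rw [← Finset.sum_subtype (Finset.univ.filter p) (by simp) f]
  exact (Finset.sum_filter_of_ne (fun x _ hx => by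
    by_contra hp
    exact hx (h0 x hp))).symm

lemma exists_maximal_clique_superset (G : SimpleGraph V) {C : Set V} (hC : G.IsClique C) :
    ∃ D : Set V, IsMaximalClique G D ∧ C ⊆ D := by
  obtain ⟨T, hT, hmax⟩ := Finset.exists_max_image
    (Finset.univ.filter fun T : Finset V => G.IsClique ↑T ∧ C ⊆ ↑T) Finset.card
    ⟨C.toFinset, Finset.mem_filter.mpr ⟨Finset.mem_univ _, by
      rw [Set.coe_toFinset]; exact ⟨hC, subset_rfl⟩⟩⟩
  rw [Finset.mem_filter] at hT
  refine ⟨↑T, ⟨hT.2.1, ?_⟩, hT.2.2⟩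
  intro D hD hTD
  have hDfin : D.toFinset ∈ Finset.univ.filter
      fun T : Finset V => G.IsClique ↑T ∧ C ⊆ ↑T := by
    refine Finset.mem_filter.mpr ⟨Finset.mem_univ _, by rw [Set.coe_toFinset]; exact hD, by
      rw [Set.coe_toFinset]; exact hT.2.2.trans hTD⟩
  have hsub : T ⊆ D.toFinset := by
    intro x hx
    rw [Set.mem_toFinset]
    exact hTD hx
  have := Finset.eq_of_subset_of_card_le hsub (hmax _ hDfin)
  rw [← Set.coe_toFinset D, ← this]

lemma psd_on_clique {G : SimpleGraph V} {Q : Matrix V V ℝ}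
    (hcl : ∀ C : Set V, IsMaximalClique G C →
      Matrix.PosSemidef (Q.submatrix (fun v : C => v.1) (fun v : C => v.1)))
    {C : Set V} (hC : G.IsClique C) :
    Matrix.PosSemidef (Q.submatrix (fun v : C => v.1) (fun v : C => v.1)) := by
  obtain ⟨D, hD, hCD⟩ := exists_maximal_clique_superset G hC
  have h := (hcl D hD).submatrix (fun v : C => (⟨v.1, hCD v.2⟩ : D))
  rw [Matrix.submatrix_submatrix] at h
  exact h

lemma psd_on_clique' {G : SimpleGraph V} {Q : Matrix V V ℝ}
    (hcl : ∀ C : Set V, IsMaximalClique G C →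
      Matrix.PosSemidef (Q.submatrix (fun v : C => v.1) (fun v : C => v.1)))
    {C : Set V} (hC : G.IsClique C) {ι : Type*} [Fintype ι] (f : ι → V)
    (hf : ∀ i, f i ∈ C) : Matrix.PosSemidef (Q.submatrix f f) := by
  have hpsd := psd_on_clique hcl hC
  have h := hpsd.submatrix (fun i : ι => (⟨f i, hf i⟩ : C))
  rw [Matrix.submatrix_submatrix] at h
  exact h

end MatrixPrelim

section CompletionStep

open Matrix

variable {V : Type*} [Fintype V] [DecidableEq V]

open scoped MatrixOrder in
lemma psd_eq_conjTranspose_mul_self {n : Type*} [Fintype n] [DecidableEq n] (A : Matrix n n ℝ)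
    (hK : A.PosSemidef) : ∃ B : Matrix n n ℝ, A = B.conjTranspose * B := by
  obtain ⟨B, hB⟩ := CStarAlgebra.nonneg_iff_eq_star_mul_self.mp hK.nonneg
  exact ⟨B, hB⟩

set_option maxHeartbeats 2000000 in
lemma completion_step {G : SimpleGraph V}
    {Q : Matrix V V ℝ} (hQsym : Q.IsSymm) {v : V}
    (hsimp : G.IsClique (G.neighborSet v))
    (hK : Matrix.PosSemidef (Q.submatrix
      (fun k : (insert v (G.neighborSet v) : Set V) => k.1)
      (fun k : (insert v (G.neighborSet v) : Set V) => k.1)))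
    {P' : Matrix {u : V // u ≠ v} {u : V // u ≠ v} ℝ} (hP' : P'.PosSemidef)
    (hagree : ∀ u w : {u : V // u ≠ v}, (u = w ∨ G.Adj u.1 w.1) → P' u w = Q u.1 w.1) :
    ∃ P : Matrix V V ℝ, P.PosSemidef ∧ ∀ β γ : V, (β = γ ∨ G.Adj β γ) → P β γ = Q β γ := by
  classical
  have hQs : ∀ i j : V, Q i j = Q j i := fun i j => by
    rw [← congrFun (congrFun hQsym j) i, Matrix.transpose_apply]
  have hsymP' : ∀ i j, P' i j = P' j i := fun i j => by
    have h := congrFun (congrFun hP'.1 i) j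
    rw [Matrix.conjTranspose_apply, star_trivial] at h
    exact h.symm
  obtain ⟨Bm, hBm⟩ := psd_eq_conjTranspose_mul_self _ hK
  let E := EuclideanSpace ℝ (insert v (G.neighborSet v) : Set V)
  let d : (insert v (G.neighborSet v) : Set V) → E := fun k => WithLp.toLp 2 (fun i => Bm i k)
  have hinner : ∀ k k', (inner ℝ (d k) (d k') : ℝ) = Q k.1 k'.1 := by
    intro k k'
    have h := congrFun (congrFun hBm k) k'
    rw [Matrix.submatrix_apply] at h
    rw [PiLp.inner_apply, h, Matrix.mul_apply]
    simp [d, Matrix.conjTranspose_apply, starRingEnd_apply, mul_comm]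
  let v₀ : (insert v (G.neighborSet v) : Set V) := ⟨v, Set.mem_insert _ _⟩
  let g : {k : (insert v (G.neighborSet v) : Set V) // k.1 ≠ v} → E := fun k => d k.1
  set Wsub : Submodule ℝ E := Submodule.span ℝ (Set.range g) with hWdef
  set pvec : E := Wsub.starProjection (d v₀) with hpdef
  have hpmem : pvec ∈ Wsub := Wsub.starProjection_apply_mem _
  obtain ⟨c, hc⟩ := (Submodule.mem_span_range_iff_exists_fun ℝ).mp hpmem
  have hproj : ∀ k : {k : (insert v (G.neighborSet v) : Set V) // k.1 ≠ v},
      (inner ℝ (d k.1) pvec : ℝ) = inner ℝ (d k.1) (d v₀) := by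
    intro k
    have h := Submodule.starProjection_inner_eq_zero (K := Wsub) (d v₀) (g k)
      (Submodule.subset_span (Set.mem_range_self k))
    rw [inner_sub_left, sub_eq_zero] at h
    calc (inner ℝ (d k.1) pvec : ℝ) = inner ℝ pvec (d k.1) := real_inner_comm _ _
    _ = inner ℝ (d v₀) (d k.1) := h.symm
    _ = inner ℝ (d k.1) (d v₀) := real_inner_comm _ _
  -- the coefficient vector on V' and the new row
  let z : {u : V // u ≠ v} → ℝ := fun u =>
    if h : u.1 ∈ G.neighborSet v then c ⟨⟨u.1, Set.mem_insert_of_mem _ h⟩, u.2⟩ else 0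
  let r : {u : V // u ≠ v} → ℝ := fun u => ∑ w, P' u w * z w
  -- the sum over V' of a function supported on neighbors equals a sum over NK
  let eN : {w : {u : V // u ≠ v} // w.1 ∈ G.neighborSet v} ≃
      {k : (insert v (G.neighborSet v) : Set V) // k.1 ≠ v} :=
    { toFun := fun w => ⟨⟨w.1.1, Set.mem_insert_of_mem _ w.2⟩, w.1.2⟩
      invFun := fun k => ⟨⟨k.1.1, k.2⟩, by
        rcases k.1.2 with h | h
        · exact absurd h k.2
        · exact h⟩
      left_inv := fun w => rfl
      right_inv := fun k => rfl }
  -- key evaluation of `r` at neighbors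
  have hrd : ∀ (u : {u : V // u ≠ v}) (hu : u.1 ∈ G.neighborSet v),
      r u = inner ℝ (d ⟨u.1, Set.mem_insert_of_mem _ hu⟩) pvec := by
    intro u hu
    have h1 : r u = ∑ w : {w : {u : V // u ≠ v} // w.1 ∈ G.neighborSet v},
        P' u w.1 * z w.1 :=
      sum_support_subtype _ _ (fun w hw => by simp only [z, dif_neg hw, mul_zero, zero_mul])
    rw [h1, Fintype.sum_equiv eN _
      (fun k => c k * inner ℝ (d ⟨u.1, Set.mem_insert_of_mem _ hu⟩) (d k.1)) ?_]
    · rw [← hc, inner_sum]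
      apply Finset.sum_congr rfl
      intro k _
      rw [real_inner_smul_right]
    · intro w
      have hz : z w.1 = c (eN w) := by
        simp only [z, dif_pos w.2]
        rfl
      have hPQ : P' u w.1 = Q u.1 w.1.1 := by
        apply hagree
        by_cases heq : u.1 = w.1.1
        · exact Or.inl (Subtype.ext heq)
        · exact Or.inr (hsimp hu w.2 heq)
      rw [hz, hPQ, ← hinner ⟨u.1, Set.mem_insert_of_mem _ hu⟩ ⟨w.1.1, Set.mem_insert_of_mem _ w.2⟩]
      exact mul_comm _ _
  have hrQ : ∀ (u : {u : V // u ≠ v}) (hu : u.1 ∈ G.neighborSet v), r u = Q v u.1 := by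
    intro u hu
    rw [hrd u hu, hproj ⟨⟨u.1, Set.mem_insert_of_mem _ hu⟩, u.2⟩]
    rw [hinner ⟨u.1, Set.mem_insert_of_mem _ hu⟩ v₀]
    exact hQs _ _
  -- the quadratic bound
  have hzr : ∑ u, z u * r u = (inner ℝ pvec pvec : ℝ) := by
    have h1 : ∑ u, z u * r u = ∑ w : {w : {u : V // u ≠ v} // w.1 ∈ G.neighborSet v},
        z w.1 * r w.1 :=
      sum_support_subtype _ _ (fun w hw => by simp only [z, dif_neg hw, mul_zero, zero_mul])
    rw [h1, Fintype.sum_equiv eN _ (fun k => c k * inner ℝ (g k) pvec) ?_]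
    · rw [← hc, sum_inner]
      apply Finset.sum_congr rfl
      intro k _
      rw [real_inner_smul_left]
    · intro w
      have hz : z w.1 = c (eN w) := by
        simp only [z, dif_pos w.2]
        rfl
      rw [hz, hrd w.1 w.2]
      rfl
  have hpp_le : (inner ℝ pvec pvec : ℝ) ≤ Q v v := by
    have horth : (inner ℝ (d v₀ - pvec) pvec : ℝ) = 0 :=
      Submodule.starProjection_inner_eq_zero (K := Wsub) (d v₀) pvec hpmem
    have hdecomp := norm_add_sq_real pvec (d v₀ - pvec)
    rw [add_sub_cancel] at hdecomp
    have h1 : (inner ℝ pvec (d v₀ - pvec) : ℝ) = 0 := by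
      rw [real_inner_comm]; exact horth
    have h2 : (inner ℝ pvec pvec : ℝ) = ‖pvec‖ ^ 2 := real_inner_self_eq_norm_sq pvec
    have h3 : (inner ℝ (d v₀) (d v₀) : ℝ) = ‖d v₀‖ ^ 2 := real_inner_self_eq_norm_sq _
    have h4 : (inner ℝ (d v₀) (d v₀) : ℝ) = Q v v := hinner v₀ v₀
    nlinarith [sq_nonneg ‖d v₀ - pvec‖]
  -- the completed matrix
  let P : Matrix V V ℝ := fun β γ =>
    if hβ : β = v then (if hγ : γ = v then Q v v else r ⟨γ, hγ⟩)
    else if hγ : γ = v then r ⟨β, hβ⟩ else P' ⟨β, hβ⟩ ⟨γ, hγ⟩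
  have hPvv : P v v = Q v v := by simp [P]
  have hPvu : ∀ (u : V) (hu : u ≠ v), P v u = r ⟨u, hu⟩ := by
    intro u hu; simp [P, hu]
  have hPuv : ∀ (u : V) (hu : u ≠ v), P u v = r ⟨u, hu⟩ := by
    intro u hu; simp [P, hu]
  have hPuw : ∀ (u w : V) (hu : u ≠ v) (hw : w ≠ v), P u w = P' ⟨u, hu⟩ ⟨w, hw⟩ := by
    intro u w hu hw; simp [P, hu, hw]
  have hherm : P.IsHermitian := by
    apply Matrix.ext
    intro β γ
    rw [Matrix.conjTranspose_apply, star_trivial]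
    by_cases hβ : β = v <;> by_cases hγ : γ = v
    · rw [hβ, hγ]
    · rw [hβ, hPuv γ hγ, hPvu γ hγ]
    · rw [hγ, hPvu β hβ, hPuv β hβ]
    · rw [hPuw γ β hγ hβ, hPuw β γ hβ hγ]; exact hsymP' _ _
  have hpsd : P.PosSemidef := by
    refine .of_dotProduct_mulVec_nonneg hherm ?_
    intro x
    have hstar : star x = x := funext fun i => star_trivial _
    rw [hstar]
    set t := x v with htdef
    set y : {u : V // u ≠ v} → ℝ := fun u => x u.1 with hydef
    have hMv : (P *ᵥ x) v = Q v v * t + ∑ u : {u : V // u ≠ v}, r u * y u := by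
      show ∑ γ, P v γ * x γ = _
      rw [sum_split v (fun γ => P v γ * x γ)]
      congr 1
      · rw [hPvv]
      · apply Finset.sum_congr rfl
        intro u _
        rw [hPvu u.1 u.2]
    have hMu : ∀ u : {u : V // u ≠ v},
        (P *ᵥ x) u.1 = r u * t + ∑ w, P' u w * y w := by
      intro u
      show ∑ γ, P u.1 γ * x γ = _
      rw [sum_split v (fun γ => P u.1 γ * x γ)]
      congr 1
      · rw [hPuv u.1 u.2]
      · apply Finset.sum_congr rfl
        intro w _
        rw [hPuw u.1 w.1 u.2 w.2]
    have hLL : x ⬝ᵥ (P *ᵥ x) = t * (P *ᵥ x) v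
        + ∑ u : {u : V // u ≠ v}, y u * (P *ᵥ x) u.1 := by
      show ∑ β, x β * (P *ᵥ x) β = _
      rw [sum_split v (fun β => x β * (P *ᵥ x) β)]
    have hLval : x ⬝ᵥ (P *ᵥ x) = Q v v * (t * t)
        + 2 * t * (∑ u : {u : V // u ≠ v}, r u * y u)
        + (∑ u : {u : V // u ≠ v}, y u * (∑ w, P' u w * y w)) := by
      rw [hLL, hMv]
      have h2 : ∑ u : {u : V // u ≠ v}, y u * ((P *ᵥ x) u.1)
          = t * (∑ u : {u : V // u ≠ v}, r u * y u)
            + ∑ u : {u : V // u ≠ v}, y u * (∑ w, P' u w * y w) := by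
        rw [Finset.mul_sum, ← Finset.sum_add_distrib]
        apply Finset.sum_congr rfl
        intro u _
        rw [hMu u]
        ring
      rw [h2]
      ring
    have hQF : (0:ℝ) ≤ ∑ u : {u : V // u ≠ v},
        (y u + t * z u) * (∑ w, P' u w * (y w + t * z w)) := by
      have h := hP'.dotProduct_mulVec_nonneg (fun u => y u + t * z u)
      have hstar' : star (fun u : {u : V // u ≠ v} => y u + t * z u)
          = fun u => y u + t * z u := funext fun i => star_trivial _
      rw [hstar'] at h
      exact h
    have hin : ∀ u : {u : V // u ≠ v},
        ∑ w, P' u w * (y w + t * z w) = (∑ w, P' u w * y w) + t * r u := by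
      intro u
      simp_rw [mul_add]
      rw [Finset.sum_add_distrib]
      congr 1
      rw [Finset.mul_sum]
      apply Finset.sum_congr rfl
      intro w _
      ring
    have hexp : ∑ u : {u : V // u ≠ v}, (y u + t * z u) * (∑ w, P' u w * (y w + t * z w))
        = (∑ u : {u : V // u ≠ v}, y u * (∑ w, P' u w * y w))
          + t * (∑ u : {u : V // u ≠ v}, r u * y u)
          + t * (∑ u : {u : V // u ≠ v}, z u * (∑ w, P' u w * y w))
          + t * t * (∑ u : {u : V // u ≠ v}, z u * r u) := by
      calc ∑ u : {u : V // u ≠ v}, (y u + t * z u) * (∑ w, P' u w * (y w + t * z w))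
          = ∑ u : {u : V // u ≠ v}, (y u * (∑ w, P' u w * y w) + t * (r u * y u)
            + t * (z u * (∑ w, P' u w * y w)) + t * t * (z u * r u)) := by
            apply Finset.sum_congr rfl
            intro u _
            rw [hin u]
            ring
        _ = _ := by
            rw [Finset.sum_add_distrib, Finset.sum_add_distrib, Finset.sum_add_distrib,
              ← Finset.mul_sum, ← Finset.mul_sum, ← Finset.mul_sum]
    have hswap : ∑ u : {u : V // u ≠ v}, z u * (∑ w, P' u w * y w)
        = ∑ u : {u : V // u ≠ v}, r u * y u := by
      have hr : ∀ u : {u : V // u ≠ v}, r u * y u = ∑ w, P' u w * z w * y u := by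
        intro u
        rw [show r u = ∑ w, P' u w * z w from rfl, Finset.sum_mul]
      rw [Finset.sum_congr rfl fun u _ => hr u]
      simp_rw [Finset.mul_sum]
      rw [Finset.sum_comm]
      apply Finset.sum_congr rfl
      intro i _
      apply Finset.sum_congr rfl
      intro j _
      rw [hsymP' j i]
      ring
    have hS3le : ∑ u : {u : V // u ≠ v}, z u * r u ≤ Q v v := by
      rw [hzr]
      exact hpp_le
    have hfinal : x ⬝ᵥ (P *ᵥ x)
        = (∑ u : {u : V // u ≠ v}, (y u + t * z u) * (∑ w, P' u w * (y w + t * z w)))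
          + t * t * (Q v v - ∑ u : {u : V // u ≠ v}, z u * r u) := by
      rw [hLval, hexp, hswap]
      ring
    rw [hfinal]
    have hnn : 0 ≤ t * t * (Q v v - ∑ u : {u : V // u ≠ v}, z u * r u) :=
      mul_nonneg (mul_self_nonneg t) (sub_nonneg.mpr hS3le)
    linarith
  refine ⟨P, hpsd, ?_⟩
  rintro β γ (rfl | hadj)
  · by_cases hβ : β = v
    · rw [hβ]; exact hPvv
    · rw [hPuw β β hβ hβ]; exact hagree _ _ (Or.inl rfl)
  · by_cases hβ : β = v
    · by_cases hγ : γ = v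
      · exfalso; rw [hβ, hγ] at hadj; exact G.loopless.irrefl v hadj
      · rw [hβ] at hadj ⊢
        rw [hPvu γ hγ]
        exact hrQ ⟨γ, hγ⟩ hadj
    · by_cases hγ : γ = v
      · rw [hγ] at hadj ⊢
        rw [hPuv β hβ]
        rw [hrQ ⟨β, hβ⟩ hadj.symm]
        exact hQs v β
      · rw [hPuw β γ hβ hγ]
        exact hagree _ _ (Or.inr hadj)

end CompletionStep

section Main
universe u
open Matrix

set_option maxHeartbeats 1000000 in
theorem completion_exists :
    ∀ (n : ℕ) (V : Type u) [Fintype V] [DecidableEq V] (G : SimpleGraph V),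
      Fintype.card V ≤ n → IsChordal G →
      ∀ (Q : Matrix V V ℝ), Q.IsSymm →
      (∀ β γ, β ≠ γ → ¬ G.Adj β γ → Q β γ = 0) →
      (∀ C : Set V, IsMaximalClique G C →
        Matrix.PosSemidef (Q.submatrix (fun v : C => v.1) (fun v : C => v.1))) →
      ∃ P : Matrix V V ℝ, P.PosSemidef ∧
        ∀ β γ, (β = γ ∨ G.Adj β γ) → P β γ = Q β γ := by
  intro n
  induction n with
  | zero =>
    intro V _ _ G hcard _ Q _ _ _
    have hemp : IsEmpty V := Fintype.card_eq_zero_iff.mp (le_antisymm hcard (Nat.zero_le _))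
    exact ⟨0, Matrix.PosSemidef.zero, fun β => hemp.elim β⟩
  | succ n IH =>
    intro V _ _ G hcard hchord Q hQsym hpat hcl
    rcases isEmpty_or_nonempty V with hemp | hne
    · exact ⟨0, Matrix.PosSemidef.zero, fun β => hemp.elim β⟩
    · obtain ⟨v, hsimp⟩ := exists_simplicial hchord
      -- the induced graph on V \ {v}
      let G' : SimpleGraph {u : V // u ≠ v} := G.comap (Function.Embedding.subtype _)
      have hG'chord : IsChordal G' := isChordal_comap hchord (Function.Embedding.subtype _)
      have hcard' : Fintype.card {u : V // u ≠ v} ≤ n := by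
        have h1 : Fintype.card {u : V // u ≠ v} < Fintype.card V := by
          refine Fintype.card_lt_of_injective_of_notMem Subtype.val
            Subtype.val_injective (b := v) ?_
          rw [Subtype.range_coe_subtype]
          simp
        omega
      let Q' : Matrix {u : V // u ≠ v} {u : V // u ≠ v} ℝ :=
        Q.submatrix Subtype.val Subtype.val
      have hQs : ∀ i j : V, Q i j = Q j i := fun i j => by
        rw [← congrFun (congrFun hQsym j) i, Matrix.transpose_apply]
      have hQ'sym : Q'.IsSymm := by
        apply Matrix.ext
        intro i j
        rw [Matrix.transpose_apply]
        exact hQs j.1 i.1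
      have hpat' : ∀ β γ : {u : V // u ≠ v}, β ≠ γ → ¬ G'.Adj β γ → Q' β γ = 0 :=
        fun β γ hne hnadj => hpat β.1 γ.1 (fun h => hne (Subtype.ext h)) hnadj
      have hcl' : ∀ C : Set {u : V // u ≠ v}, IsMaximalClique G' C →
          Matrix.PosSemidef (Q'.submatrix (fun w : C => w.1) (fun w : C => w.1)) := by
        intro C hC
        have hclique : G.IsClique (Subtype.val '' C) := by
          rintro i ⟨i', hi', rfl⟩ j ⟨j', hj', rfl⟩ hij
          exact hC.1 hi' hj' (fun h => hij (congrArg Subtype.val h))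
        have h := psd_on_clique' hcl hclique (fun w : C => w.1.1)
          (fun w => Set.mem_image_of_mem _ w.2)
        rw [show (Q'.submatrix (fun w : C => w.1) fun w : C => w.1)
          = Q.submatrix (fun w : C => w.1.1) (fun w : C => w.1.1) from rfl]
        exact h
      obtain ⟨P', hP'psd, hP'agree⟩ := IH {u : V // u ≠ v} G' hcard' hG'chord Q' hQ'sym
        hpat' hcl'
      -- the clique `K = {v} ∪ N(v)`
      have hKclique : G.IsClique (insert v (G.neighborSet v) : Set V) := by
        rintro i (rfl | hi) j (rfl | hj) hij
        · exact absurd rfl hij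
        · exact hj
        · exact hi.symm
        · exact hsimp hi hj hij
      have hKpsd : Matrix.PosSemidef (Q.submatrix
          (fun k : (insert v (G.neighborSet v) : Set V) => k.1)
          (fun k : (insert v (G.neighborSet v) : Set V) => k.1)) :=
        psd_on_clique' hcl hKclique _ (fun k => k.2)
      have hagree : ∀ u w : {u : V // u ≠ v}, (u = w ∨ G.Adj u.1 w.1) →
          P' u w = Q u.1 w.1 := by
        intro u w h
        rcases h with rfl | hadj
        · exact hP'agree u u (Or.inl rfl)
        · exact hP'agree u w (Or.inr hadj)
      exact completion_step hQsym hsimp hKpsd hP'psd hagree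

end Main

end GJSW

/-- Grone–Johnson–Sá–Wolkowicz: a partial symmetric matrix with chordal sparsity
pattern `G` has a PSD completion iff all principal submatrices indexed by maximal
cliques of `G` are PSD. -/
theorem psd_completion_iff_cliques_posSemidef (V : Type*) [Fintype V] [DecidableEq V]
    (G : SimpleGraph V) (hchord : IsChordal G)
    (Q : Matrix V V ℝ) (hQsym : Q.IsSymm)
    (hpat : ∀ β γ, β ≠ γ → ¬ G.Adj β γ → Q β γ = 0) :
    (∃ P : Matrix V V ℝ, P.PosSemidef ∧
        ∀ β γ, (β = γ ∨ G.Adj β γ) → P β γ = Q β γ) ↔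
      ∀ C : Set V, IsMaximalClique G C →
        Matrix.PosSemidef (Q.submatrix (fun v : C => v.1) (fun v : C => v.1)) := by
  constructor
  · rintro ⟨P, hPpsd, hPagree⟩ C hC
    have heq : Q.submatrix (fun v : C => v.1) (fun v : C => v.1)
        = P.submatrix (fun v : C => v.1) (fun v : C => v.1) := by
      apply Matrix.ext
      intro i j
      rw [Matrix.submatrix_apply, Matrix.submatrix_apply]
      by_cases hij : (i : V) = j
      · exact (hPagree i.1 j.1 (Or.inl hij)).symm
      · exact (hPagree i.1 j.1 (Or.inr (hC.1 i.2 j.2 hij))).symm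
    rw [heq]
    exact hPpsd.submatrix _
  · intro hcl
    exact GJSW.completion_exists (Fintype.card V) V G le_rfl hchord Q hQsym hpat hcl
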